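/- arXiv:2309.01807 — 13 statements merged into one kernel-verified Lean document; each statement's English description precedes it below -/
import Mathlib

section
/- Let Ω be a finite nonempty type and let p, q : Ω → ℝ satisfy p x > 0 and q x > 0 for all x, ∑_x p x = 1 and ∑_x q x = 1. Then the value ∑_x p x * Real.log (p x / q x) is the greatest value of the functional G(f) := ∑_x p x * Real.log (f x) − ∑_x q x * f x + 1 over all f : Ω → ℝ with f x > 0 for all x; that is, G(f) ≤ ∑_x p x * Real.log (p x / q x) for every such f, and G attains this value at f = fun x => p x / q x. -/
/-- Finite-sample-space variational characterization of the density ratio: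
the functional `G f = ∑ x, p x * log (f x) − ∑ x, q x * f x + 1` is maximized
over positive `f` by `f = p/q`, with maximal value `∑ x, p x * log (p x / q x)`
(the KL divergence). -/
theorem density_ratio_variational_max
    {Ω : Type*} [Fintype Ω] [Nonempty Ω]
    (p q : Ω → ℝ)
    (hp : ∀ x, 0 < p x) (hq : ∀ x, 0 < q x)
    (hps : ∑ x, p x = 1) (hqs : ∑ x, q x = 1) :
    (∀ f : Ω → ℝ, (∀ x, 0 < f x) →
      (∑ x, p x * Real.log (f x)) - (∑ x, q x * f x) + 1
        ≤ ∑ x, p x * Real.log (p x / q x)) ∧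
    ((∑ x, p x * Real.log (p x / q x)) - (∑ x, q x * (p x / q x)) + 1
        = ∑ x, p x * Real.log (p x / q x)) := by
  constructor
  · intro f hf
    have key : ∀ x, p x * Real.log (f x) - p x * Real.log (p x / q x)
        ≤ q x * f x - p x := by
      intro x
      have hpx := hp x; have hqx := hq x; have hfx := hf x
      have h1 : Real.log (f x) - Real.log (p x / q x)
          = Real.log (f x * q x / p x) := by
        rw [Real.log_div (by positivity) (by positivity),
          Real.log_div (by positivity) (by positivity),
          Real.log_mul (by positivity) (by positivity)]
        ring
      have h2 : Real.log (f x * q x / p x) ≤ f x * q x / p x - 1 :=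
        Real.log_le_sub_one_of_pos (by positivity)
      have := mul_le_mul_of_nonneg_left (h1 ▸ h2 : Real.log (f x) - Real.log (p x / q x) ≤ f x * q x / p x - 1) hpx.le
      calc p x * Real.log (f x) - p x * Real.log (p x / q x)
          = p x * (Real.log (f x) - Real.log (p x / q x)) := by ring
        _ ≤ p x * (f x * q x / p x - 1) := this
        _ = q x * f x - p x := by field_simp
    have hsum : ∑ x, (p x * Real.log (f x) - p x * Real.log (p x / q x)) ≤ ∑ x, (q x * f x - p x) := Finset.sum_le_sum (fun x _ => key x)
    simp only [Finset.sum_sub_distrib, hps] at hsum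
    linarith
  · have : ∀ x, q x * (p x / q x) = p x := fun x => by
      rw [mul_div_cancel₀ _ (hq x).ne']
    simp only [this, hps]
    ring
end

section
/- Let Ω be a finite nonempty type and let p, q : Ω → ℝ satisfy p x > 0 and q x > 0 for all x, ∑_x p x = 1 and ∑_x q x = 1. If f : Ω → ℝ satisfies f x > 0 for all x and ∑_x p x * Real.log (f x) − ∑_x q x * f x + 1 = ∑_x p x * Real.log (p x / q x), then f x = p x / q x for every x ∈ Ω. -/
/-- Uniqueness of the maximizer of the variational objective
`G f = ∑ x, p x * log (f x) − ∑ x, q x * f x + 1`: if a positive `f` attains the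
maximal value `∑ x, p x * log (p x / q x)` (the KL divergence), then `f = p/q`. -/
theorem density_ratio_variational_max_unique
    {Ω : Type*} [Fintype Ω] [Nonempty Ω]
    (p q : Ω → ℝ)
    (hp : ∀ x, 0 < p x) (hq : ∀ x, 0 < q x)
    (hps : ∑ x, p x = 1) (hqs : ∑ x, q x = 1)
    (f : Ω → ℝ) (hf : ∀ x, 0 < f x)
    (hmax : (∑ x, p x * Real.log (f x)) - (∑ x, q x * f x) + 1
      = ∑ x, p x * Real.log (p x / q x)) :
    ∀ x, f x = p x / q x := by
  set g : Ω → ℝ := fun x => f x * q x / p x with hg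
  have hgpos : ∀ x, 0 < g x := fun x => div_pos (mul_pos (hf x) (hq x)) (hp x)
  have hlog : ∀ x, Real.log (f x) = Real.log (p x / q x) + Real.log (g x) := by
    intro x
    rw [← Real.log_mul (div_pos (hp x) (hq x)).ne' (ne_of_gt (hgpos x))]
    congr 1
    simp only [hg]
    field_simp [hg, (hp x).ne', (hq x).ne']
  have hqf : ∀ x, q x * f x = p x * g x := by
    intro x
    simp only [hg]
    field_simp [hg, (hp x).ne', (hq x).ne']
  have hsum : ∑ x, p x * (g x - 1 - Real.log (g x)) = 0 := by
    have : ∑ x, p x * (g x - 1 - Real.log (g x))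
        = (∑ x, p x * g x) - (∑ x, p x) - (∑ x, p x * Real.log (g x)) := by
      rw [← Finset.sum_sub_distrib, ← Finset.sum_sub_distrib]
      congr 1; ext x; ring
    rw [this, hps]
    have h2 : ∑ x, p x * Real.log (f x)
        = (∑ x, p x * Real.log (p x / q x)) + ∑ x, p x * Real.log (g x) := by
      rw [← Finset.sum_add_distrib]
      congr 1; ext x; rw [hlog x]; ring
    have h3 : ∑ x, q x * f x = ∑ x, p x * g x := by
      congr 1; ext x; exact hqf x
    rw [h2, h3] at hmax
    linarith
  have hnn : ∀ x ∈ Finset.univ, 0 ≤ p x * (g x - 1 - Real.log (g x)) := by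
    intro x _
    have := Real.log_le_sub_one_of_pos (hgpos x)
    nlinarith [hp x]
  have hzero := (Finset.sum_eq_zero_iff_of_nonneg hnn).mp hsum
  intro x
  have hx := hzero x (Finset.mem_univ x)
  have hgx : g x = 1 := by
    by_contra hne
    have := Real.log_lt_sub_one_of_pos (hgpos x) hne
    nlinarith [hp x]
  have : f x * q x / p x = 1 := hgx
  rw [eq_div_iff (hq x).ne']
  field_simp [(hp x).ne', (hq x).ne'] at this
  linarith
end

section
/- Let S, A be finite nonempty types, P_tr and P_te transition kernels, π a policy, d0 an initial distribution, and γ a discount factor with 0 ≤ γ < 1. Suppose d_tr : S → A → ℝ satisfies the Bellman flow equation for (P_tr, π, d0, γ) and d_te : S → A → ℝ satisfies the Bellman flow equation for (P_te, π, d0, γ), and that d_tr s a > 0 for all s, a. Let μ : S → A → ℝ satisfy μ s a > 0 for all s, a, and define β s a := d_tr s a / μ s a and w s a := d_te s a / d_tr s a. Then for every q : S → A → ℝ: ∑_{s,a,s'} μ s a * P_te s a s' * w s a * β s a * (q s a − γ * q(s', π)) − (1 − γ) * ∑_{s} d0 s * q(s, π) = 0. -/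
/-- The MIS loss `L_w(w, β, q)` vanishes for every discriminator `q` when
`β = d_tr/μ` and `w = d_te/d_tr` are the exact density ratios, where `d_tr` and
`d_te` are the discounted occupancies (Bellman flow solutions) in the simulator
`P_tr` and the real environment `P_te`. -/
theorem mis_loss_zero_at_true_ratio
    {S A : Type*} [Fintype S] [Fintype A] [Nonempty S] [Nonempty A]
    (Ptr Pte : S → A → S → ℝ) (π : S → A → ℝ) (d0 : S → ℝ) (γ : ℝ)
    (hPtr_nonneg : ∀ s a s', 0 ≤ Ptr s a s')
    (hPtr_sum : ∀ s a, ∑ s', Ptr s a s' = 1)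
    (hPte_nonneg : ∀ s a s', 0 ≤ Pte s a s')
    (hPte_sum : ∀ s a, ∑ s', Pte s a s' = 1)
    (hπ_nonneg : ∀ s a, 0 ≤ π s a) (hπ_sum : ∀ s, ∑ a, π s a = 1)
    (hd0_nonneg : ∀ s, 0 ≤ d0 s) (hd0_sum : ∑ s, d0 s = 1)
    (hγ0 : 0 ≤ γ) (hγ1 : γ < 1)
    (dtr dte : S → A → ℝ)
    (hdtr : ∀ s a, dtr s a
      = (1 - γ) * d0 s * π s a + γ * π s a * ∑ sb, ∑ ab, Ptr sb ab s * dtr sb ab)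
    (hdte : ∀ s a, dte s a
      = (1 - γ) * d0 s * π s a + γ * π s a * ∑ sb, ∑ ab, Pte sb ab s * dte sb ab)
    (hdtr_pos : ∀ s a, 0 < dtr s a)
    (μ : S → A → ℝ) (hμ : ∀ s a, 0 < μ s a)
    (β : S → A → ℝ) (hβ : ∀ s a, β s a = dtr s a / μ s a)
    (w : S → A → ℝ) (hw : ∀ s a, w s a = dte s a / dtr s a)
    (q : S → A → ℝ) :
    (∑ s, ∑ a, ∑ s', μ s a * Pte s a s' * w s a * β s a *
        (q s a - γ * ∑ a', π s' a' * q s' a'))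
      - (1 - γ) * ∑ s, d0 s * ∑ a, π s a * q s a = 0 := by
  set V : S → ℝ := fun s => ∑ a, π s a * q s a with hV
  set F : S → ℝ := fun s => ∑ sb, ∑ ab, Pte sb ab s * dte sb ab with hF
  have key : ∀ s a s', μ s a * Pte s a s' * w s a * β s a *
      (q s a - γ * ∑ a', π s' a' * q s' a')
      = Pte s a s' * dte s a * (q s a - γ * V s') := by
    intro s a s'
    rw [hβ, hw, hV]
    field_simp [(hμ s a).ne', (hdtr_pos s a).ne']
  have h1 : (∑ s, ∑ a, ∑ s', μ s a * Pte s a s' * w s a * β s a *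
        (q s a - γ * ∑ a', π s' a' * q s' a'))
      = (∑ s, ∑ a, dte s a * q s a) - γ * ∑ s', F s' * V s' := by
    simp only [key, mul_sub, Finset.sum_sub_distrib]
    congr 1
    · refine Finset.sum_congr rfl fun s _ => Finset.sum_congr rfl fun a _ => ?_
      rw [← Finset.sum_mul, ← Finset.sum_mul, hPte_sum, one_mul]
    · rw [show (∑ s, ∑ a, ∑ s', Pte s a s' * dte s a * (γ * V s'))
            = ∑ s : S, ∑ s' : S, ∑ a : A, Pte s a s' * dte s a * (γ * V s')
          from Finset.sum_congr rfl fun s _ => Finset.sum_comm]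
      rw [Finset.sum_comm, Finset.mul_sum]
      refine Finset.sum_congr rfl fun s' _ => ?_
      rw [hF]
      simp only [Finset.sum_mul, Finset.mul_sum]
      refine Finset.sum_congr rfl fun s _ => Finset.sum_congr rfl fun a _ => ?_
      ring
  have h2 : (∑ s, ∑ a, dte s a * q s a)
      = (1 - γ) * (∑ s, d0 s * V s) + γ * ∑ s, F s * V s := by
    simp only [Finset.mul_sum]
    rw [← Finset.sum_add_distrib]
    refine Finset.sum_congr rfl fun s _ => ?_
    have : ∑ a, dte s a * q s a
        = ∑ a, ((1 - γ) * d0 s * (π s a * q s a) + γ * F s * (π s a * q s a)) := by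
      refine Finset.sum_congr rfl fun a _ => ?_
      rw [hdte s a]; rw [hF]; ring
    rw [this, Finset.sum_add_distrib, ← Finset.mul_sum, ← Finset.mul_sum, hV]
    ring
  rw [h1, h2]
  ring
end

section
/- Let S, A be finite nonempty types, P_tr and P_te transition kernels, π a policy, d0 an initial distribution, and γ a discount factor with 0 ≤ γ < 1. Suppose d_tr : S → A → ℝ satisfies the Bellman flow equation for (P_tr, π, d0, γ) and d_te : S → A → ℝ satisfies the Bellman flow equation for (P_te, π, d0, γ). Let μ : S → A → ℝ satisfy μ s a > 0 for all s, a, and define β s a := d_tr s a / μ s a. If w : S → A → ℝ satisfies, for every q : S → A → ℝ, ∑_{s,a,s'} μ s a * P_te s a s' * w s a * β s a * (q s a − γ * q(s', π)) − (1 − γ) * ∑_{s} d0 s * q(s, π) = 0, then w s a * d_tr s a = d_te s a for all s, a. -/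
/-- Uniqueness for the MIS loss: if the loss `L_w(w, β, q)` with `β = d_tr/μ`
vanishes for every discriminator `q`, then `w * d_tr = d_te`, i.e. `w` is the
density ratio of the two occupancies. -/
theorem mis_loss_zero_implies_true_ratio
    {S A : Type*} [Fintype S] [Fintype A] [Nonempty S] [Nonempty A]
    (Ptr Pte : S → A → S → ℝ) (π : S → A → ℝ) (d0 : S → ℝ) (γ : ℝ)
    (hPtr_nonneg : ∀ s a s', 0 ≤ Ptr s a s')
    (hPtr_sum : ∀ s a, ∑ s', Ptr s a s' = 1)
    (hPte_nonneg : ∀ s a s', 0 ≤ Pte s a s')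
    (hPte_sum : ∀ s a, ∑ s', Pte s a s' = 1)
    (hπ_nonneg : ∀ s a, 0 ≤ π s a) (hπ_sum : ∀ s, ∑ a, π s a = 1)
    (hd0_nonneg : ∀ s, 0 ≤ d0 s) (hd0_sum : ∑ s, d0 s = 1)
    (hγ0 : 0 ≤ γ) (hγ1 : γ < 1)
    (dtr dte : S → A → ℝ)
    (hdtr : ∀ s a, dtr s a
      = (1 - γ) * d0 s * π s a + γ * π s a * ∑ sb, ∑ ab, Ptr sb ab s * dtr sb ab)
    (hdte : ∀ s a, dte s a
      = (1 - γ) * d0 s * π s a + γ * π s a * ∑ sb, ∑ ab, Pte sb ab s * dte sb ab)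
    (μ : S → A → ℝ) (hμ : ∀ s a, 0 < μ s a)
    (β : S → A → ℝ) (hβ : ∀ s a, β s a = dtr s a / μ s a)
    (w : S → A → ℝ)
    (hloss : ∀ q : S → A → ℝ,
      (∑ s, ∑ a, ∑ s', μ s a * Pte s a s' * w s a * β s a *
          (q s a - γ * ∑ a', π s' a' * q s' a'))
        - (1 - γ) * ∑ s, d0 s * ∑ a, π s a * q s a = 0) :
    ∀ s a, w s a * dtr s a = dte s a := by
  classical
  have hμβ : ∀ s a, μ s a * β s a = dtr s a := by
    intro s a
    rw [hβ]
    exact mul_div_cancel₀ _ (hμ s a).ne'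
  -- pointwise Bellman-type equation for g = w * dtr
  have key : ∀ s a, w s a * dtr s a
      = (1 - γ) * d0 s * π s a
        + γ * π s a * ∑ sb, ∑ ab, Pte sb ab s * (w sb ab * dtr sb ab) := by
    intro s0 a0
    have h := hloss (fun s a => (if s = s0 then (1:ℝ) else 0) * (if a = a0 then 1 else 0))
    simp only [mul_ite, mul_one, mul_zero, ite_mul, one_mul, zero_mul] at h
    rw [sub_eq_zero] at h
    have hrw : ∀ s a s', μ s a * Pte s a s' * w s a * β s a
        = Pte s a s' * (w s a * dtr s a) := by
      intro s a s'
      rw [← hμβ s a]; ring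
    simp only [hrw, Finset.sum_ite_eq', Finset.mem_univ, if_true, mul_sub, mul_ite,
      mul_one, mul_zero, Finset.sum_sub_distrib, Finset.sum_ite_eq] at h
    have h1 : (∑ x : S, ∑ x1 : A, ∑ x2 : S, if x1 = a0 then if x = s0 then
          Pte x x1 x2 * (w x x1 * dtr x x1) else 0 else 0)
        = w s0 a0 * dtr s0 a0 := by
      have he : ∀ x x1, (∑ x2 : S, if x1 = a0 then if x = s0 then
            Pte x x1 x2 * (w x x1 * dtr x x1) else 0 else 0)
          = if x1 = a0 then if x = s0 then w x x1 * dtr x x1 else 0 else 0 := by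
        intro x x1
        split_ifs <;> simp [← Finset.sum_mul, hPte_sum]
      simp [he, Finset.sum_ite_eq', Finset.sum_ite_eq]
    rw [h1] at h
    have h2 : (∑ x : S, ∑ x1 : A, Pte x x1 s0 * (w x x1 * dtr x x1) * (γ * π s0 a0))
        = (∑ sb : S, ∑ ab : A, Pte sb ab s0 * (w sb ab * dtr sb ab)) * (γ * π s0 a0) := by
      simp [Finset.sum_mul]
    rw [h2] at h
    linarith
  set F : S → A → ℝ := fun s a => w s a * dtr s a - dte s a with hFdef
  have hFeq : ∀ s a, F s a = γ * π s a * ∑ sb, ∑ ab, Pte sb ab s * F sb ab := by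
    intro s a
    have hs : (∑ sb, ∑ ab, Pte sb ab s * F sb ab)
        = (∑ sb, ∑ ab, Pte sb ab s * (w sb ab * dtr sb ab))
          - ∑ sb, ∑ ab, Pte sb ab s * dte sb ab := by
      simp [hFdef, mul_sub, Finset.sum_sub_distrib]
    simp only [hFdef]
    rw [hs, key s a, hdte s a]
    ring
  have habs : ∀ s a, |F s a| ≤ γ * π s a * ∑ sb, ∑ ab, Pte sb ab s * |F sb ab| := by
    intro s a
    rw [hFeq s a, abs_mul, abs_mul, abs_of_nonneg hγ0, abs_of_nonneg (hπ_nonneg s a)]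
    apply mul_le_mul_of_nonneg_left _ (mul_nonneg hγ0 (hπ_nonneg s a))
    calc |∑ sb, ∑ ab, Pte sb ab s * F sb ab|
        ≤ ∑ sb, |∑ ab, Pte sb ab s * F sb ab| := Finset.abs_sum_le_sum_abs _ _
      _ ≤ ∑ sb, ∑ ab, |Pte sb ab s * F sb ab| := by
          gcongr with sb _
          exact Finset.abs_sum_le_sum_abs _ _
      _ = ∑ sb, ∑ ab, Pte sb ab s * |F sb ab| := by
          simp [abs_mul, abs_of_nonneg (hPte_nonneg _ _ _)]
  have htot : (∑ s, ∑ a, |F s a|) ≤ γ * ∑ s, ∑ a, |F s a| := by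
    calc (∑ s, ∑ a, |F s a|)
        ≤ ∑ s, ∑ a, γ * π s a * ∑ sb, ∑ ab, Pte sb ab s * |F sb ab| := by
          gcongr with s _ a _
          exact habs s a
      _ = γ * ∑ s, (∑ sb, ∑ ab, Pte sb ab s * |F sb ab|) := by
          rw [Finset.mul_sum]
          refine Finset.sum_congr rfl fun s _ => ?_
          rw [← Finset.sum_mul, ← Finset.mul_sum, hπ_sum, mul_one]
      _ = γ * ∑ sb, ∑ ab, (∑ s, Pte sb ab s) * |F sb ab| := by
          rw [Finset.sum_comm]
          congr 1
          refine Finset.sum_congr rfl fun sb _ => ?_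
          rw [Finset.sum_comm]
          refine Finset.sum_congr rfl fun ab _ => ?_
          rw [Finset.sum_mul]
      _ = γ * ∑ sb, ∑ ab, |F sb ab| := by simp [hPte_sum]
  have hnn : 0 ≤ ∑ s, ∑ a, |F s a| :=
    Finset.sum_nonneg fun s _ => Finset.sum_nonneg fun a _ => abs_nonneg _
  have hzero : (∑ s, ∑ a, |F s a|) = 0 := by nlinarith
  intro s a
  have : |F s a| = 0 := by
    have := (Finset.sum_eq_zero_iff_of_nonneg
      (fun s _ => Finset.sum_nonneg fun a _ => abs_nonneg (F s a))).mp hzero s (Finset.mem_univ s)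
    exact (Finset.sum_eq_zero_iff_of_nonneg
      (fun a _ => abs_nonneg (F s a))).mp this a (Finset.mem_univ a)
  have hF0 : F s a = 0 := abs_eq_zero.mp this
  have : w s a * dtr s a - dte s a = 0 := hF0
  linarith
end

section
/- Let S, A be finite nonempty types, P a transition kernel, π a policy, d0 an initial distribution, and γ a discount factor with 0 ≤ γ < 1. Then there exists a unique function d : S → A → ℝ satisfying the Bellman flow equation for (P, π, d0, γ); moreover this d satisfies d s a ≥ 0 for all s, a and ∑_{s,a} d s a = 1. -/
/-- Existence and uniqueness of the normalized discounted state-action occupancy: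
the Bellman flow equation has a unique solution `d`, which is nonnegative and
sums to one. -/
theorem bellman_flow_existsUnique
    {S A : Type*} [Fintype S] [Fintype A] [Nonempty S] [Nonempty A]
    (P : S → A → S → ℝ) (π : S → A → ℝ) (d0 : S → ℝ) (γ : ℝ)
    (hP_nonneg : ∀ s a s', 0 ≤ P s a s')
    (hP_sum : ∀ s a, ∑ s', P s a s' = 1)
    (hπ_nonneg : ∀ s a, 0 ≤ π s a) (hπ_sum : ∀ s, ∑ a, π s a = 1)
    (hd0_nonneg : ∀ s, 0 ≤ d0 s) (hd0_sum : ∑ s, d0 s = 1)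
    (hγ0 : 0 ≤ γ) (hγ1 : γ < 1) :
    (∃! d : S → A → ℝ, ∀ s a, d s a
        = (1 - γ) * d0 s * π s a + γ * π s a * ∑ sb, ∑ ab, P sb ab s * d sb ab) ∧
    (∀ d : S → A → ℝ,
      (∀ s a, d s a
        = (1 - γ) * d0 s * π s a + γ * π s a * ∑ sb, ∑ ab, P sb ab s * d sb ab) →
      (∀ s a, 0 ≤ d s a) ∧ (∑ s, ∑ a, d s a = 1)) := by
  classical
  -- key sum-swap computation
  have swap : ∀ g : S → A → ℝ,
      (∑ s, ∑ a, γ * π s a * ∑ sb, ∑ ab, P sb ab s * g sb ab)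
        = γ * ∑ sb, ∑ ab, g sb ab := by
    intro g
    have h1 : ∀ s : S, (∑ a, γ * π s a * ∑ sb, ∑ ab, P sb ab s * g sb ab)
        = γ * ∑ sb, ∑ ab, P sb ab s * g sb ab := by
      intro s
      simp_rw [mul_assoc γ]
      rw [← Finset.mul_sum, ← Finset.sum_mul, hπ_sum, one_mul]
    calc (∑ s, ∑ a, γ * π s a * ∑ sb, ∑ ab, P sb ab s * g sb ab)
        = ∑ s, γ * ∑ sb, ∑ ab, P sb ab s * g sb ab :=
          Finset.sum_congr rfl fun s _ => h1 s
      _ = γ * ∑ s, ∑ sb, ∑ ab, P sb ab s * g sb ab := by rw [Finset.mul_sum]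
      _ = γ * ∑ sb, ∑ ab, g sb ab := by
          congr 1
          rw [Finset.sum_comm]
          refine Finset.sum_congr rfl fun sb _ => ?_
          rw [Finset.sum_comm]
          refine Finset.sum_congr rfl fun ab _ => ?_
          rw [← Finset.sum_mul, hP_sum, one_mul]
  -- contraction lemma
  have contr : ∀ e : S → A → ℝ,
      (∀ s a, e s a = γ * π s a * ∑ sb, ∑ ab, P sb ab s * e sb ab) → e = 0 := by
    intro e he
    have habs : ∀ s a, |e s a| ≤ γ * π s a * ∑ sb, ∑ ab, P sb ab s * |e sb ab| := by
      intro s a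
      rw [he s a, abs_mul, abs_mul, abs_of_nonneg hγ0, abs_of_nonneg (hπ_nonneg s a)]
      have h2 : |∑ sb, ∑ ab, P sb ab s * e sb ab|
          ≤ ∑ sb, ∑ ab, P sb ab s * |e sb ab| := by
        calc |∑ sb, ∑ ab, P sb ab s * e sb ab|
            ≤ ∑ sb, |∑ ab, P sb ab s * e sb ab| := Finset.abs_sum_le_sum_abs _ _
          _ ≤ ∑ sb, ∑ ab, |P sb ab s * e sb ab| :=
              Finset.sum_le_sum fun sb _ => Finset.abs_sum_le_sum_abs _ _
          _ = ∑ sb, ∑ ab, P sb ab s * |e sb ab| := by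
              refine Finset.sum_congr rfl fun sb _ => Finset.sum_congr rfl fun ab _ => ?_
              rw [abs_mul, abs_of_nonneg (hP_nonneg _ _ _)]
      exact mul_le_mul_of_nonneg_left h2 (mul_nonneg hγ0 (hπ_nonneg s a))
    have hsum : (∑ s, ∑ a, |e s a|) ≤ γ * ∑ s, ∑ a, |e s a| := by
      calc (∑ s, ∑ a, |e s a|)
          ≤ ∑ s, ∑ a, γ * π s a * ∑ sb, ∑ ab, P sb ab s * |e sb ab| :=
            Finset.sum_le_sum fun s _ => Finset.sum_le_sum fun a _ => habs s a
        _ = γ * ∑ s, ∑ a, |e s a| := swap _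
    have hnn : 0 ≤ ∑ s, ∑ a, |e s a| :=
      Finset.sum_nonneg fun s _ => Finset.sum_nonneg fun a _ => abs_nonneg _
    have hz : (∑ s, ∑ a, |e s a|) = 0 := by nlinarith
    funext s a
    have h3 := (Finset.sum_eq_zero_iff_of_nonneg
      (fun s _ => Finset.sum_nonneg fun a _ => abs_nonneg (e s a))).mp hz s (Finset.mem_univ s)
    have h4 := (Finset.sum_eq_zero_iff_of_nonneg
      (fun a _ => abs_nonneg (e s a))).mp h3 a (Finset.mem_univ a)
    simpa using abs_eq_zero.mp h4
  -- the linear map d ↦ d - γ π P^T d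
  let L : (S → A → ℝ) →ₗ[ℝ] (S → A → ℝ) :=
    { toFun := fun d s a => d s a - γ * π s a * ∑ sb, ∑ ab, P sb ab s * d sb ab
      map_add' := by
        intro x y; funext s a
        simp only [Pi.add_apply, mul_add, Finset.sum_add_distrib]
        ring
      map_smul' := by
        intro c x; funext s a
        simp only [Pi.smul_apply, smul_eq_mul, RingHom.id_apply, Finset.mul_sum]
        simp_rw [mul_left_comm (P _ _ _) c, ← Finset.mul_sum]
        ring }
  have hLinj : Function.Injective L := by
    intro x y hxy
    have he : ∀ s a, (x - y) s a = γ * π s a * ∑ sb, ∑ ab, P sb ab s * (x - y) sb ab := by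
      intro s a
      have h := congrFun (congrFun hxy s) a
      simp only [L, LinearMap.coe_mk, AddHom.coe_mk] at h
      simp only [Pi.sub_apply, mul_sub, Finset.sum_sub_distrib]
      ring_nf
      ring_nf at h
      linarith
    have := contr (x - y) he
    exact sub_eq_zero.mp this
  have hLsurj : Function.Surjective L :=
    (LinearMap.injective_iff_surjective).mp hLinj
  obtain ⟨d, hd⟩ := hLsurj (fun s a => (1 - γ) * d0 s * π s a)
  have hdEq : ∀ s a, d s a
      = (1 - γ) * d0 s * π s a + γ * π s a * ∑ sb, ∑ ab, P sb ab s * d sb ab := by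
    intro s a
    have h := congrFun (congrFun hd s) a
    simp only [L, LinearMap.coe_mk, AddHom.coe_mk] at h
    linarith
  refine ⟨⟨d, hdEq, ?_⟩, ?_⟩
  · -- uniqueness
    intro d' hd'
    have he : ∀ s a, (d' - d) s a
        = γ * π s a * ∑ sb, ∑ ab, P sb ab s * (d' - d) sb ab := by
      intro s a
      simp only [Pi.sub_apply, mul_sub, Finset.sum_sub_distrib]
      rw [hd' s a, hdEq s a]
      ring
    exact sub_eq_zero.mp (contr (d' - d) he)
  · -- nonnegativity and normalization for any solution
    intro d hdEq
    constructor
    · -- nonnegativity via negative part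
      set f : S → A → ℝ := fun s a => max (-(d s a)) 0 with hf
      have hfnn : ∀ s a, 0 ≤ f s a := fun s a => le_max_right _ _
      have hfle : ∀ s a, f s a ≤ γ * π s a * ∑ sb, ∑ ab, P sb ab s * f sb ab := by
        intro s a
        have hrhs_nn : 0 ≤ γ * π s a * ∑ sb, ∑ ab, P sb ab s * f sb ab := by
          refine mul_nonneg (mul_nonneg hγ0 (hπ_nonneg s a)) ?_
          exact Finset.sum_nonneg fun sb _ => Finset.sum_nonneg fun ab _ =>
            mul_nonneg (hP_nonneg _ _ _) (hfnn _ _)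
        refine max_le ?_ hrhs_nn
        have hmono : (∑ sb, ∑ ab, P sb ab s * (-(d sb ab)))
            ≤ ∑ sb, ∑ ab, P sb ab s * f sb ab := by
          refine Finset.sum_le_sum fun sb _ => Finset.sum_le_sum fun ab _ => ?_
          exact mul_le_mul_of_nonneg_left (le_max_left _ _) (hP_nonneg _ _ _)
        have hneg : -(d s a) ≤ γ * π s a * ∑ sb, ∑ ab, P sb ab s * (-(d sb ab)) := by
          rw [hdEq s a]
          have h1 : 0 ≤ (1 - γ) * d0 s * π s a :=
            mul_nonneg (mul_nonneg (by linarith) (hd0_nonneg s)) (hπ_nonneg s a)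
          have h2 : (∑ sb, ∑ ab, P sb ab s * (-(d sb ab)))
              = -(∑ sb, ∑ ab, P sb ab s * d sb ab) := by
            simp [Finset.sum_neg_distrib, mul_neg]
          rw [h2]
          nlinarith [mul_nonneg hγ0 (hπ_nonneg s a)]
        calc -(d s a) ≤ γ * π s a * ∑ sb, ∑ ab, P sb ab s * (-(d sb ab)) := hneg
          _ ≤ γ * π s a * ∑ sb, ∑ ab, P sb ab s * f sb ab :=
            mul_le_mul_of_nonneg_left hmono (mul_nonneg hγ0 (hπ_nonneg s a))
      have hsum : (∑ s, ∑ a, f s a) ≤ γ * ∑ s, ∑ a, f s a := by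
        calc (∑ s, ∑ a, f s a)
            ≤ ∑ s, ∑ a, γ * π s a * ∑ sb, ∑ ab, P sb ab s * f sb ab :=
              Finset.sum_le_sum fun s _ => Finset.sum_le_sum fun a _ => hfle s a
          _ = γ * ∑ s, ∑ a, f s a := swap _
      have hnn : 0 ≤ ∑ s, ∑ a, f s a :=
        Finset.sum_nonneg fun s _ => Finset.sum_nonneg fun a _ => hfnn s a
      have hz : (∑ s, ∑ a, f s a) = 0 := by nlinarith
      intro s a
      have h3 := (Finset.sum_eq_zero_iff_of_nonneg
        (fun s _ => Finset.sum_nonneg fun a _ => hfnn s a)).mp hz s (Finset.mem_univ s)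
      have h4 := (Finset.sum_eq_zero_iff_of_nonneg
        (fun a _ => hfnn s a)).mp h3 a (Finset.mem_univ a)
      have : max (-(d s a)) 0 = 0 := h4
      have := le_max_left (-(d s a)) 0
      linarith [this.trans_eq h4]
    · -- normalization
      have hT : (∑ s, ∑ a, d s a)
          = (1 - γ) + γ * ∑ s, ∑ a, d s a := by
        calc (∑ s, ∑ a, d s a)
            = ∑ s, ∑ a, ((1 - γ) * d0 s * π s a
                + γ * π s a * ∑ sb, ∑ ab, P sb ab s * d sb ab) :=
              Finset.sum_congr rfl fun s _ => Finset.sum_congr rfl fun a _ => hdEq s a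
          _ = (∑ s, ∑ a, (1 - γ) * d0 s * π s a)
                + ∑ s, ∑ a, γ * π s a * ∑ sb, ∑ ab, P sb ab s * d sb ab := by
              simp [Finset.sum_add_distrib]
          _ = (1 - γ) + γ * ∑ s, ∑ a, d s a := by
              rw [swap]
              congr 1
              calc (∑ s, ∑ a, (1 - γ) * d0 s * π s a)
                  = ∑ s, (1 - γ) * d0 s * ∑ a, π s a := by
                    refine Finset.sum_congr rfl fun s _ => ?_
                    rw [Finset.mul_sum]
                _ = ∑ s, (1 - γ) * d0 s := by
                    refine Finset.sum_congr rfl fun s _ => by rw [hπ_sum, mul_one]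
                _ = (1 - γ) * ∑ s, d0 s := by rw [← Finset.mul_sum]
                _ = 1 - γ := by rw [hd0_sum, mul_one]
      nlinarith [hT]
end

section
/- Let S, A be finite nonempty types, P_tr and P_te transition kernels, π a policy, d0 an initial distribution, and γ a discount factor with 0 ≤ γ < 1. Suppose d_tr : S → A → ℝ satisfies the Bellman flow equation for (P_tr, π, d0, γ). Let r : S → A → ℝ and let Q : S → A → ℝ satisfy the Bellman equation for (P_te, π, r, γ), and set J := (1 − γ) * ∑_{s} d0 s * Q(s, π). Suppose there is a finite index set I, coefficients λ : I → ℝ with λ i ≥ 0 and ∑_i λ i = 1, and functions q_i : S → A → ℝ for i ∈ I, such that Q s a = ∑_i λ i * q_i s a for all s, a. Then for every w : S → A → ℝ there exists i ∈ I with |∑_{s,a} d_tr s a * w s a * r s a − J| ≤ |∑_{s,a,s'} d_tr s a * P_te s a s' * w s a * (q_i s a − γ * q_i(s', π)) − (1 − γ) * ∑_{s} d0 s * q_i(s, π)|. -/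
/-- Upper bound on the off-environment evaluation error via the discriminator
class: if the true Q-function lies in the convex hull of `{q_i}`, then for any
weight `w` the evaluation error is bounded by the loss at some `q_i`. -/
theorem ope_error_le_sup_discriminator
    {S A : Type*} [Fintype S] [Fintype A] [Nonempty S] [Nonempty A]
    (Ptr Pte : S → A → S → ℝ) (π : S → A → ℝ) (d0 : S → ℝ) (γ : ℝ)
    (hPtr_nonneg : ∀ s a s', 0 ≤ Ptr s a s')
    (hPtr_sum : ∀ s a, ∑ s', Ptr s a s' = 1)
    (hPte_nonneg : ∀ s a s', 0 ≤ Pte s a s')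
    (hPte_sum : ∀ s a, ∑ s', Pte s a s' = 1)
    (hπ_nonneg : ∀ s a, 0 ≤ π s a) (hπ_sum : ∀ s, ∑ a, π s a = 1)
    (hd0_nonneg : ∀ s, 0 ≤ d0 s) (hd0_sum : ∑ s, d0 s = 1)
    (hγ0 : 0 ≤ γ) (hγ1 : γ < 1)
    (dtr : S → A → ℝ)
    (hdtr : ∀ s a, dtr s a
      = (1 - γ) * d0 s * π s a + γ * π s a * ∑ sb, ∑ ab, Ptr sb ab s * dtr sb ab)
    (r : S → A → ℝ) (Q : S → A → ℝ)
    (hQ : ∀ s a, Q s a = r s a + γ * ∑ s', Pte s a s' * ∑ a', π s' a' * Q s' a')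
    (J : ℝ) (hJ : J = (1 - γ) * ∑ s, d0 s * ∑ a, π s a * Q s a)
    {I : Type*} [Fintype I]
    (lam : I → ℝ) (hlam_nonneg : ∀ i, 0 ≤ lam i) (hlam_sum : ∑ i, lam i = 1)
    (qi : I → S → A → ℝ)
    (hconv : ∀ s a, Q s a = ∑ i, lam i * qi i s a) :
    ∀ w : S → A → ℝ, ∃ i : I,
      |(∑ s, ∑ a, dtr s a * w s a * r s a) - J|
        ≤ |(∑ s, ∑ a, ∑ s', dtr s a * Pte s a s' * w s a *
              (qi i s a - γ * ∑ a', π s' a' * qi i s' a'))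
            - (1 - γ) * ∑ s, d0 s * ∑ a, π s a * qi i s a| := by
  intro w
  -- the loss at discriminator i
  set L : I → ℝ := fun i =>
    (∑ s, ∑ a, ∑ s', dtr s a * Pte s a s' * w s a *
        (qi i s a - γ * ∑ a', π s' a' * qi i s' a'))
      - (1 - γ) * ∑ s, d0 s * ∑ a, π s a * qi i s a with hLdef
  -- π-average of Q as a convex combination
  have hQπ : ∀ s', (∑ a', π s' a' * Q s' a')
      = ∑ i, lam i * ∑ a', π s' a' * qi i s' a' := by
    intro s'
    simp only [hconv, Finset.mul_sum]
    rw [Finset.sum_comm]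
    exact Finset.sum_congr rfl fun i _ => Finset.sum_congr rfl fun a _ => by ring
  -- step 1: rewrite dtr*w*r as the inner s' sum with Q
  have h2 : ∀ s a, (∑ s', dtr s a * Pte s a s' * w s a *
      (Q s a - γ * ∑ a', π s' a' * Q s' a')) = dtr s a * w s a * r s a := by
    intro s a
    have hc : (∑ s', dtr s a * Pte s a s' * w s a *
        (Q s a - γ * ∑ a', π s' a' * Q s' a'))
        = dtr s a * w s a * Q s a * (∑ s', Pte s a s')
          - γ * (dtr s a * w s a) *
            ∑ s', Pte s a s' * ∑ a', π s' a' * Q s' a' := by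
      rw [Finset.mul_sum, Finset.mul_sum, ← Finset.sum_sub_distrib]
      exact Finset.sum_congr rfl fun s' _ => by ring
    rw [hc, hPte_sum, hQ s a]; ring
  -- step 2: the integrand with Q is a convex combination of integrands with qi
  have h3 : ∀ s a s', dtr s a * Pte s a s' * w s a *
      (Q s a - γ * ∑ a', π s' a' * Q s' a')
      = ∑ i, lam i * (dtr s a * Pte s a s' * w s a *
          (qi i s a - γ * ∑ a', π s' a' * qi i s' a')) := by
    intro s a s'
    rw [hconv, hQπ, Finset.mul_sum, ← Finset.sum_sub_distrib, Finset.mul_sum]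
    exact Finset.sum_congr rfl fun i _ => by ring
  have h4 : (1 - γ) * ∑ s, d0 s * ∑ a, π s a * Q s a
      = ∑ i, lam i * ((1 - γ) * ∑ s, d0 s * ∑ a, π s a * qi i s a) := by
    have : ∀ s, d0 s * ∑ a, π s a * Q s a
        = ∑ i, lam i * (d0 s * ∑ a, π s a * qi i s a) := by
      intro s
      rw [hQπ, Finset.mul_sum]
      exact Finset.sum_congr rfl fun i _ => by ring
    simp only [this, Finset.mul_sum]
    rw [Finset.sum_comm]
    exact Finset.sum_congr rfl fun i _ => Finset.sum_congr rfl fun s _ => Finset.sum_congr rfl fun a _ => by ring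
  -- combine: the error equals ∑ i, lam i * L i
  have hT : (∑ s, ∑ a, dtr s a * w s a * r s a) - J = ∑ i, lam i * L i := by
    have hswap : ∑ s, ∑ a, ∑ s', ∑ i, lam i * (dtr s a * Pte s a s' * w s a *
        (qi i s a - γ * ∑ a', π s' a' * qi i s' a'))
        = ∑ i, ∑ s, ∑ a, ∑ s', lam i * (dtr s a * Pte s a s' * w s a *
        (qi i s a - γ * ∑ a', π s' a' * qi i s' a')) := by
      rw [show (∑ s, ∑ a, ∑ s', ∑ i, lam i * (dtr s a * Pte s a s' * w s a *
          (qi i s a - γ * ∑ a', π s' a' * qi i s' a')))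
          = ∑ s, ∑ a, ∑ i, ∑ s', lam i * (dtr s a * Pte s a s' * w s a *
          (qi i s a - γ * ∑ a', π s' a' * qi i s' a')) from
        Finset.sum_congr rfl fun s _ => Finset.sum_congr rfl fun a _ =>
          Finset.sum_comm,
        show (∑ s, ∑ a, ∑ i, ∑ s', lam i * (dtr s a * Pte s a s' * w s a *
          (qi i s a - γ * ∑ a', π s' a' * qi i s' a')))
          = ∑ s, ∑ i, ∑ a, ∑ s', lam i * (dtr s a * Pte s a s' * w s a *
          (qi i s a - γ * ∑ a', π s' a' * qi i s' a')) from
        Finset.sum_congr rfl fun s _ => Finset.sum_comm,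
        Finset.sum_comm]
    have hfirst : (∑ s, ∑ a, dtr s a * w s a * r s a)
        = ∑ i, lam i * ∑ s, ∑ a, ∑ s', dtr s a * Pte s a s' * w s a *
            (qi i s a - γ * ∑ a', π s' a' * qi i s' a') := by
      calc (∑ s, ∑ a, dtr s a * w s a * r s a)
          = ∑ s, ∑ a, ∑ s', ∑ i, lam i * (dtr s a * Pte s a s' * w s a *
              (qi i s a - γ * ∑ a', π s' a' * qi i s' a')) := by
            refine Finset.sum_congr rfl fun s _ => Finset.sum_congr rfl fun a _ => ?_
            rw [← h2 s a]
            exact Finset.sum_congr rfl fun s' _ => h3 s a s'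
        _ = ∑ i, ∑ s, ∑ a, ∑ s', lam i * (dtr s a * Pte s a s' * w s a *
              (qi i s a - γ * ∑ a', π s' a' * qi i s' a')) := hswap
        _ = ∑ i, lam i * ∑ s, ∑ a, ∑ s', dtr s a * Pte s a s' * w s a *
              (qi i s a - γ * ∑ a', π s' a' * qi i s' a') := by
            refine Finset.sum_congr rfl fun i _ => ?_
            simp only [Finset.mul_sum]
    rw [hJ, hfirst, h4, ← Finset.sum_sub_distrib]
    exact Finset.sum_congr rfl fun i _ => by rw [hLdef]; ring
  -- pick the maximizing discriminator
  have hIne : Nonempty I := by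
    by_contra h
    rw [not_nonempty_iff] at h
    rw [Finset.univ_eq_empty, Finset.sum_empty] at hlam_sum
    exact one_ne_zero hlam_sum.symm
  obtain ⟨i, -, hi⟩ := Finset.exists_max_image (Finset.univ : Finset I)
    (fun i => |L i|) Finset.univ_nonempty
  refine ⟨i, ?_⟩
  rw [hT]
  calc |∑ j, lam j * L j| ≤ ∑ j, |lam j * L j| := Finset.abs_sum_le_sum_abs _ _
    _ = ∑ j, lam j * |L j| := Finset.sum_congr rfl fun j _ => by
        rw [abs_mul, abs_of_nonneg (hlam_nonneg j)]
    _ ≤ ∑ j, lam j * |L i| := Finset.sum_le_sum fun j _ =>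
        mul_le_mul_of_nonneg_left (hi j (Finset.mem_univ j)) (hlam_nonneg j)
    _ = |L i| := by rw [← Finset.sum_mul, hlam_sum, one_mul]
end

section
/- Let S, A be finite nonempty types, P_tr and P_te transition kernels, π a policy, d0 an initial distribution, and γ a discount factor with 0 ≤ γ < 1. Suppose d_tr : S → A → ℝ satisfies the Bellman flow equation for (P_tr, π, d0, γ). Let μ : S → A → ℝ satisfy μ s a > 0 for all s, a and define β s a := d_tr s a / μ s a. Let r : S → A → ℝ and let Q : S → A → ℝ satisfy the Bellman equation for (P_te, π, r, γ). Then for every w : S → A → ℝ: ∑_{s,a,s'} μ s a * P_te s a s' * w s a * β s a * (Q s a − γ * Q(s', π)) − ∑_{s,a} d_tr s a * w s a * r s a = 0. -/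
/-- The Q-estimation loss `L_q(w, β, Q)` vanishes for every weight function `w`
when `Q` is the true Q-function of `π` in `P_te` and `β = d_tr/μ` is the exact
ratio of the simulator occupancy to the data distribution. -/
theorem q_loss_zero_at_true_q
    {S A : Type*} [Fintype S] [Fintype A] [Nonempty S] [Nonempty A]
    (Ptr Pte : S → A → S → ℝ) (π : S → A → ℝ) (d0 : S → ℝ) (γ : ℝ)
    (hPtr_nonneg : ∀ s a s', 0 ≤ Ptr s a s')
    (hPtr_sum : ∀ s a, ∑ s', Ptr s a s' = 1)
    (hPte_nonneg : ∀ s a s', 0 ≤ Pte s a s')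
    (hPte_sum : ∀ s a, ∑ s', Pte s a s' = 1)
    (hπ_nonneg : ∀ s a, 0 ≤ π s a) (hπ_sum : ∀ s, ∑ a, π s a = 1)
    (hd0_nonneg : ∀ s, 0 ≤ d0 s) (hd0_sum : ∑ s, d0 s = 1)
    (hγ0 : 0 ≤ γ) (hγ1 : γ < 1)
    (dtr : S → A → ℝ)
    (hdtr : ∀ s a, dtr s a
      = (1 - γ) * d0 s * π s a + γ * π s a * ∑ sb, ∑ ab, Ptr sb ab s * dtr sb ab)
    (μ : S → A → ℝ) (hμ : ∀ s a, 0 < μ s a)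
    (β : S → A → ℝ) (hβ : ∀ s a, β s a = dtr s a / μ s a)
    (r : S → A → ℝ) (Q : S → A → ℝ)
    (hQ : ∀ s a, Q s a = r s a + γ * ∑ s', Pte s a s' * ∑ a', π s' a' * Q s' a') :
    ∀ w : S → A → ℝ,
      (∑ s, ∑ a, ∑ s', μ s a * Pte s a s' * w s a * β s a *
          (Q s a - γ * ∑ a', π s' a' * Q s' a'))
        - (∑ s, ∑ a, dtr s a * w s a * r s a) = 0 := by
  intro w
  have key : ∀ s a, (∑ s', μ s a * Pte s a s' * w s a * β s a *
      (Q s a - γ * ∑ a', π s' a' * Q s' a')) = dtr s a * w s a * r s a := by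
    intro s a
    have hμβ : μ s a * β s a = dtr s a := by
      rw [hβ, mul_comm, div_mul_eq_mul_div, mul_div_assoc, div_self (hμ s a).ne', mul_one]
    have hsum : ∑ s', Pte s a s' * (Q s a - γ * ∑ a', π s' a' * Q s' a') = r s a := by
      have : ∑ s', Pte s a s' * (Q s a - γ * ∑ a', π s' a' * Q s' a')
          = (∑ s', Pte s a s') * Q s a - γ * ∑ s', Pte s a s' * ∑ a', π s' a' * Q s' a' := by
        rw [Finset.sum_mul, Finset.mul_sum, ← Finset.sum_sub_distrib]
        congr 1; ext s'; ring
      rw [this, hPte_sum]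
      have := hQ s a
      linarith
    calc (∑ s', μ s a * Pte s a s' * w s a * β s a *
        (Q s a - γ * ∑ a', π s' a' * Q s' a'))
        = dtr s a * w s a * ∑ s', Pte s a s' * (Q s a - γ * ∑ a', π s' a' * Q s' a') := by
          rw [Finset.mul_sum]; congr 1; ext s'
          rw [← hμβ]; ring
      _ = dtr s a * w s a * r s a := by rw [hsum]
  simp only [key, sub_self]
end

section
/- Let S, A be finite nonempty types, P_tr and P_te transition kernels, π a policy, d0 an initial distribution, and γ a discount factor with 0 ≤ γ < 1. Suppose d_tr satisfies the Bellman flow equation for (P_tr, π, d0, γ) with d_tr s a > 0 for all s, a, and d_te satisfies the Bellman flow equation for (P_te, π, d0, γ). Let r : S → A → ℝ and set J_te := ∑_{s,a} d_te s a * r s a. Let μ : S → A → ℝ satisfy μ s a > 0 for all s, a and define β s a := d_tr s a / μ s a. Suppose there is a finite index set I, coefficients λ : I → ℝ with λ i ≥ 0 and ∑_i λ i = 1, and functions w_i : S → A → ℝ for i ∈ I, such that d_te s a / d_tr s a = ∑_i λ i * w_i s a for all s, a. Then for every q : S → A → ℝ there exists i ∈ I with |(1 − γ) * ∑_{s} d0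 s * q(s, π) − J_te| ≤ |∑_{s,a,s'} μ s a * P_te s a s' * w_i s a * β s a * (q s a − γ * q(s', π)) − ∑_{s,a} d_tr s a * w_i s a * r s a|. -/
lemma convex_abs_le_max {I : Type*} [Fintype I] (lam : I → ℝ)
    (h0 : ∀ i, 0 ≤ lam i) (h1 : ∑ i, lam i = 1) (y : I → ℝ) :
    ∃ i, |∑ j, lam j * y j| ≤ |y i| := by
  have hne : (Finset.univ : Finset I).Nonempty := by
    rcases (Finset.univ : Finset I).eq_empty_or_nonempty with h | h
    · rw [h] at h1; simp at h1
    · exact h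
  obtain ⟨i, -, hi⟩ := Finset.exists_max_image Finset.univ (fun i => |y i|) hne
  refine ⟨i, ?_⟩
  calc |∑ j, lam j * y j| ≤ ∑ j, |lam j * y j| := Finset.abs_sum_le_sum_abs _ _
    _ ≤ ∑ j, lam j * |y i| := by
        refine Finset.sum_le_sum fun j _ => ?_
        rw [abs_mul, abs_of_nonneg (h0 j)]
        exact mul_le_mul_of_nonneg_left (hi j (Finset.mem_univ j)) (h0 j)
    _ = |y i| := by rw [← Finset.sum_mul, h1, one_mul]

/-- Upper bound on the OPE error of a candidate Q-function via the weight class: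
if the density ratio `d_te/d_tr` lies in the convex hull of `{w_i}`, then for
any discriminator `q` the evaluation error is bounded by the Q-loss at some
`w_i`. -/
theorem q_ope_error_le_sup_weight_class
    {S A : Type*} [Fintype S] [Fintype A] [Nonempty S] [Nonempty A]
    (Ptr Pte : S → A → S → ℝ) (π : S → A → ℝ) (d0 : S → ℝ) (γ : ℝ)
    (hPtr_nonneg : ∀ s a s', 0 ≤ Ptr s a s')
    (hPtr_sum : ∀ s a, ∑ s', Ptr s a s' = 1)
    (hPte_nonneg : ∀ s a s', 0 ≤ Pte s a s')
    (hPte_sum : ∀ s a, ∑ s', Pte s a s' = 1)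
    (hπ_nonneg : ∀ s a, 0 ≤ π s a) (hπ_sum : ∀ s, ∑ a, π s a = 1)
    (hd0_nonneg : ∀ s, 0 ≤ d0 s) (hd0_sum : ∑ s, d0 s = 1)
    (hγ0 : 0 ≤ γ) (hγ1 : γ < 1)
    (dtr dte : S → A → ℝ)
    (hdtr : ∀ s a, dtr s a
      = (1 - γ) * d0 s * π s a + γ * π s a * ∑ sb, ∑ ab, Ptr sb ab s * dtr sb ab)
    (hdtr_pos : ∀ s a, 0 < dtr s a)
    (hdte : ∀ s a, dte s a
      = (1 - γ) * d0 s * π s a + γ * π s a * ∑ sb, ∑ ab, Pte sb ab s * dte sb ab)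
    (r : S → A → ℝ) (Jte : ℝ) (hJte : Jte = ∑ s, ∑ a, dte s a * r s a)
    (μ : S → A → ℝ) (hμ : ∀ s a, 0 < μ s a)
    (β : S → A → ℝ) (hβ : ∀ s a, β s a = dtr s a / μ s a)
    {I : Type*} [Fintype I]
    (lam : I → ℝ) (hlam_nonneg : ∀ i, 0 ≤ lam i) (hlam_sum : ∑ i, lam i = 1)
    (wi : I → S → A → ℝ)
    (hconv : ∀ s a, dte s a / dtr s a = ∑ i, lam i * wi i s a) :
    ∀ q : S → A → ℝ, ∃ i : I,
      |(1 - γ) * (∑ s, d0 s * ∑ a, π s a * q s a) - Jte|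
        ≤ |(∑ s, ∑ a, ∑ s', μ s a * Pte s a s' * wi i s a * β s a *
              (q s a - γ * ∑ a', π s' a' * q s' a'))
            - (∑ s, ∑ a, dtr s a * wi i s a * r s a)| := by
  intro q
  set Qπ : S → ℝ := fun s' => ∑ a', π s' a' * q s' a' with hQπ
  -- X s a : the "Bellman residual" weight
  set X : S → A → ℝ := fun s a => q s a - γ * ∑ s', Pte s a s' * Qπ s' with hX
  set L : I → ℝ := fun i =>
    (∑ s, ∑ a, ∑ s', μ s a * Pte s a s' * wi i s a * β s a * (q s a - γ * Qπ s'))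
      - ∑ s, ∑ a, dtr s a * wi i s a * r s a with hL
  -- Step 1: inner sum simplification
  have hμβ : ∀ s a, μ s a * β s a = dtr s a := by
    intro s a
    rw [hβ, mul_comm]
    exact div_mul_cancel₀ (dtr s a) (hμ s a).ne'
  have hstep1 : ∀ i s a,
      (∑ s', μ s a * Pte s a s' * wi i s a * β s a * (q s a - γ * Qπ s'))
        = dtr s a * wi i s a * X s a := by
    intro i s a
    have h1 : ∀ s', μ s a * Pte s a s' * wi i s a * β s a * (q s a - γ * Qπ s')
        = dtr s a * wi i s a * (Pte s a s' * (q s a - γ * Qπ s')) := by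
      intro s'
      linear_combination (wi i s a * Pte s a s' * (q s a - γ * Qπ s')) * hμβ s a
    rw [Finset.sum_congr rfl fun s' _ => h1 s', ← Finset.mul_sum]
    congr 1
    have : ∑ s', Pte s a s' * (q s a - γ * Qπ s')
        = (∑ s', Pte s a s') * q s a - γ * ∑ s', Pte s a s' * Qπ s' := by
      rw [Finset.sum_mul, Finset.mul_sum, ← Finset.sum_sub_distrib]
      exact Finset.sum_congr rfl fun s' _ => by ring
    rw [this, hPte_sum, one_mul, hX]
  have hLi : ∀ i, L i = (∑ s, ∑ a, dtr s a * wi i s a * (X s a - r s a)) := by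
    intro i
    rw [hL]
    simp only [hstep1]
    rw [← Finset.sum_sub_distrib]
    refine Finset.sum_congr rfl fun s _ => ?_
    rw [← Finset.sum_sub_distrib]
    exact Finset.sum_congr rfl fun a _ => by ring
  -- Step 2: convex combination gives dte
  have hdte_eq : ∀ s a, (∑ i, lam i * wi i s a) * dtr s a = dte s a := by
    intro s a
    rw [← hconv s a, div_mul_cancel₀ _ (hdtr_pos s a).ne']
  have hstep2 : ∑ i, lam i * L i = (∑ s, ∑ a, dte s a * (X s a - r s a)) := by
    calc ∑ i, lam i * L i
        = ∑ i, ∑ s, ∑ a, lam i * (dtr s a * wi i s a * (X s a - r s a)) := by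
          refine Finset.sum_congr rfl fun i _ => ?_
          rw [hLi i, Finset.mul_sum]
          exact Finset.sum_congr rfl fun s _ => by rw [Finset.mul_sum]
      _ = ∑ s, ∑ a, ∑ i, lam i * (dtr s a * wi i s a * (X s a - r s a)) := by
          rw [Finset.sum_comm]
          exact Finset.sum_congr rfl fun s _ => Finset.sum_comm
      _ = ∑ s, ∑ a, dte s a * (X s a - r s a) := by
          refine Finset.sum_congr rfl fun s _ => Finset.sum_congr rfl fun a _ => ?_
          rw [← hdte_eq s a, Finset.sum_mul, Finset.sum_mul]
          exact Finset.sum_congr rfl fun i _ => by ring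
  -- Step 3: Bellman flow identity for dte
  have hflow : ∑ s, ∑ a, dte s a * q s a
      = (1 - γ) * (∑ s, d0 s * Qπ s)
        + γ * ∑ s, ∑ a, dte s a * ∑ s', Pte s a s' * Qπ s' := by
    have h1 : ∀ s, ∑ a, dte s a * q s a
        = (1 - γ) * d0 s * Qπ s
          + γ * (∑ sb, ∑ ab, Pte sb ab s * dte sb ab) * Qπ s := by
      intro s
      calc ∑ a, dte s a * q s a
          = ∑ a, ((1 - γ) * d0 s * (π s a * q s a)
              + γ * (∑ sb, ∑ ab, Pte sb ab s * dte sb ab) * (π s a * q s a)) := by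
            refine Finset.sum_congr rfl fun a _ => ?_
            rw [hdte s a]; ring
        _ = (1 - γ) * d0 s * Qπ s
              + γ * (∑ sb, ∑ ab, Pte sb ab s * dte sb ab) * Qπ s := by
            rw [Finset.sum_add_distrib, ← Finset.mul_sum, ← Finset.mul_sum]
    have h2 : ∑ s, γ * (∑ sb, ∑ ab, Pte sb ab s * dte sb ab) * Qπ s
        = γ * ∑ sb, ∑ ab, dte sb ab * ∑ s, Pte sb ab s * Qπ s := by
      simp only [Finset.mul_sum, Finset.sum_mul]
      rw [Finset.sum_comm]
      refine Finset.sum_congr rfl fun sb _ => ?_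
      rw [Finset.sum_comm]
      exact Finset.sum_congr rfl fun ab _ => Finset.sum_congr rfl fun s _ => by ring
    calc ∑ s, ∑ a, dte s a * q s a
        = ∑ s, ((1 - γ) * d0 s * Qπ s
            + γ * (∑ sb, ∑ ab, Pte sb ab s * dte sb ab) * Qπ s) :=
          Finset.sum_congr rfl fun s _ => h1 s
      _ = ∑ s, (1 - γ) * d0 s * Qπ s
            + ∑ s, γ * (∑ sb, ∑ ab, Pte sb ab s * dte sb ab) * Qπ s :=
          Finset.sum_add_distrib
      _ = (1 - γ) * (∑ s, d0 s * Qπ s)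
            + γ * ∑ s, ∑ a, dte s a * ∑ s', Pte s a s' * Qπ s' := by
          rw [h2]
          congr 1
          rw [Finset.mul_sum]
          exact Finset.sum_congr rfl fun s _ => by ring
  -- Combine: the convex combination equals the evaluation error
  have hkey : ∑ i, lam i * L i
      = (1 - γ) * (∑ s, d0 s * Qπ s) - Jte := by
    rw [hstep2, hJte]
    have : ∑ s, ∑ a, dte s a * (X s a - r s a)
        = (∑ s, ∑ a, dte s a * X s a) - ∑ s, ∑ a, dte s a * r s a := by
      rw [← Finset.sum_sub_distrib]
      refine Finset.sum_congr rfl fun s _ => ?_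
      rw [← Finset.sum_sub_distrib]
      exact Finset.sum_congr rfl fun a _ => by ring
    rw [this]
    congr 1
    have hXsum : ∑ s, ∑ a, dte s a * X s a
        = (∑ s, ∑ a, dte s a * q s a)
          - γ * ∑ s, ∑ a, dte s a * ∑ s', Pte s a s' * Qπ s' := by
      rw [Finset.mul_sum, ← Finset.sum_sub_distrib]
      refine Finset.sum_congr rfl fun s _ => ?_
      rw [Finset.mul_sum, ← Finset.sum_sub_distrib]
      refine Finset.sum_congr rfl fun a _ => ?_
      rw [hX]; ring
    rw [hXsum, hflow]; ring
  obtain ⟨i, hi⟩ := convex_abs_le_max lam hlam_nonneg hlam_sum L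
  exact ⟨i, by rw [hkey] at hi; exact hi⟩
end

section
/- Let S, A be finite nonempty types, P_te a transition kernel, π a policy, d0 an initial distribution, and γ a discount factor with 0 ≤ γ < 1. Let μ, β̂ : S → A → ℝ, let d be a positive integer, and let Φ, Ψ : S → A → (Fin d → ℝ) be feature maps; write Ψ(s', π) := ∑_{a'} π s' a' • Ψ s' a'. Define the d × d real matrix M := ∑_{s,a,s'} μ s a * P_te s a s' * β̂ s a • vecMulVec (Ψ s a − γ • Ψ(s', π)) (Φ s a) and the vector b := (1 − γ) • ∑_{s} d0 s • Ψ(s, π). If M is invertible, set α̂ := M⁻¹.mulVec b. Then for every ζ : Fin d → ℝ, with w s a := ∑_j Φ s a j * α̂ j and q s a := ∑_j Ψ s a j * ζ j, it holds that ∑_{s,a,s'} μ s a * P_te s a s' * w s a * β̂ s a * (q s a − γ * q(s', π)) − (1 − γ) * ∑_{s} d0 s * q(s, π) = 0. -/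
open Matrix

private lemma aux_vecMulVec_mulVec (d : ℕ) (u v x : Fin d → ℝ) :
    (vecMulVec u v) *ᵥ x = (v ⬝ᵥ x) • u := by
  funext i
  simp only [vecMulVec_apply, mulVec, dotProduct, Pi.smul_apply, smul_eq_mul, Finset.sum_mul]
  exact Finset.sum_congr rfl (fun k _ => by ring)

private lemma aux_sum_dot (d : ℕ) {ι : Type*} (s : Finset ι) (f : ι → Fin d → ℝ)
    (x : Fin d → ℝ) : (∑ i ∈ s, f i) ⬝ᵥ x = ∑ i ∈ s, f i ⬝ᵥ x := by
  simp only [dotProduct, Finset.sum_apply, Finset.sum_mul]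
  exact Finset.sum_comm

private lemma aux_sum_mulVec (d : ℕ) {ι : Type*} (s : Finset ι)
    (f : ι → Matrix (Fin d) (Fin d) ℝ) (x : Fin d → ℝ) :
    (∑ i ∈ s, f i) *ᵥ x = ∑ i ∈ s, f i *ᵥ x := by
  funext j
  simp only [mulVec, dotProduct, Matrix.sum_apply, Finset.sum_apply, Finset.sum_mul]
  exact Finset.sum_comm

/-- Closed-form solution of the MIS weight estimator under linear
parameterization: with `w = Φᵀ α̂` where `α̂ = M⁻¹ b`, the MIS loss
`L_w(w, β̂, q)` vanishes for every linear discriminator `q = Ψᵀ ζ`. -/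
theorem linear_mis_closed_form
    {S A : Type*} [Fintype S] [Fintype A] [Nonempty S] [Nonempty A]
    (Pte : S → A → S → ℝ) (π : S → A → ℝ) (d0 : S → ℝ) (γ : ℝ)
    (hPte_nonneg : ∀ s a s', 0 ≤ Pte s a s')
    (hPte_sum : ∀ s a, ∑ s', Pte s a s' = 1)
    (hπ_nonneg : ∀ s a, 0 ≤ π s a) (hπ_sum : ∀ s, ∑ a, π s a = 1)
    (hd0_nonneg : ∀ s, 0 ≤ d0 s) (hd0_sum : ∑ s, d0 s = 1)
    (hγ0 : 0 ≤ γ) (hγ1 : γ < 1)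
    (μ βhat : S → A → ℝ)
    (d : ℕ) (hd : 0 < d)
    (Φ Ψ : S → A → (Fin d → ℝ))
    (M : Matrix (Fin d) (Fin d) ℝ)
    (hM : M = ∑ s, ∑ a, ∑ s', (μ s a * Pte s a s' * βhat s a) •
      Matrix.vecMulVec (Ψ s a - γ • ∑ a', π s' a' • Ψ s' a') (Φ s a))
    (b : Fin d → ℝ)
    (hb : b = (1 - γ) • ∑ s, d0 s • ∑ a, π s a • Ψ s a)
    (hMunit : IsUnit M)
    (αhat : Fin d → ℝ) (hα : αhat = M⁻¹.mulVec b) :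
    ∀ ζ : Fin d → ℝ,
      (∑ s, ∑ a, ∑ s', μ s a * Pte s a s' * (∑ j, Φ s a j * αhat j) * βhat s a *
          ((∑ j, Ψ s a j * ζ j) - γ * ∑ a', π s' a' * ∑ j, Ψ s' a' j * ζ j))
        - (1 - γ) * ∑ s, d0 s * ∑ a, π s a * ∑ j, Ψ s a j * ζ j = 0 := by
  intro ζ
  have hdet : IsUnit M.det := (Matrix.isUnit_iff_isUnit_det M).mp hMunit
  have key : M *ᵥ αhat = b := by
    rw [hα, Matrix.mulVec_mulVec, Matrix.mul_nonsing_inv M hdet, Matrix.one_mulVec]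
  have h1 : (∑ s, ∑ a, ∑ s', μ s a * Pte s a s' * (∑ j, Φ s a j * αhat j) * βhat s a *
          ((∑ j, Ψ s a j * ζ j) - γ * ∑ a', π s' a' * ∑ j, Ψ s' a' j * ζ j))
      = (M *ᵥ αhat) ⬝ᵥ ζ := by
    rw [hM, aux_sum_mulVec, aux_sum_dot]
    refine Finset.sum_congr rfl fun s _ => ?_
    rw [aux_sum_mulVec, aux_sum_dot]
    refine Finset.sum_congr rfl fun a _ => ?_
    rw [aux_sum_mulVec, aux_sum_dot]
    refine Finset.sum_congr rfl fun s' _ => ?_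
    rw [smul_mulVec, aux_vecMulVec_mulVec, smul_dotProduct, smul_dotProduct,
      sub_dotProduct, smul_dotProduct, aux_sum_dot]
    have hdp : ∀ a', (π s' a' • Ψ s' a') ⬝ᵥ ζ = π s' a' * ∑ j, Ψ s' a' j * ζ j := fun a' => by
      simp only [dotProduct, Pi.smul_apply, smul_eq_mul, Finset.mul_sum, mul_assoc]
    simp only [hdp]
    simp only [dotProduct, smul_eq_mul]
    ring
  have h2 : (1 - γ) * ∑ s, d0 s * ∑ a, π s a * ∑ j, Ψ s a j * ζ j = b ⬝ᵥ ζ := by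
    rw [hb, smul_dotProduct, aux_sum_dot, smul_eq_mul]
    congr 1
    refine Finset.sum_congr rfl fun s _ => ?_
    rw [smul_dotProduct, aux_sum_dot, smul_eq_mul]
    congr 1
    refine Finset.sum_congr rfl fun a _ => ?_
    rw [smul_dotProduct, smul_eq_mul]
    rfl
  rw [h1, h2, key, sub_self]
end

section
/- Let S, A be finite nonempty types, P_te a transition kernel, π a policy, and γ a discount factor with 0 ≤ γ < 1. Let μ, β̂, d_tr, r : S → A → ℝ, let d be a positive integer, and let Φ, Ψ : S → A → (Fin d → ℝ) be feature maps; write Ψ(s', π) := ∑_{a'} π s' a' • Ψ s' a'. Define the d × d real matrix N := ∑_{s,a,s'} μ s a * P_te s a s' * β̂ s a • vecMulVec (Φ s a) (Ψ s a − γ • Ψ(s', π)) and the vector c := ∑_{s,a} (d_tr s a * r s a) • Φ s a. If N is invertible, set ζ̂ := N⁻¹.mulVec c. Then for every α : Fin d → ℝ, with w s a := ∑_j Φ s a j * α j and q s a := ∑_j Ψ s a j * ζ̂ j, it holds that ∑_{s,a,s'} μ s a * P_te s a s' * w s a * β̂ s a * (q s a − γ * q(s', π)) − ∑_{s,a} d_tr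 s a * w s a * r s a = 0. -/
open Matrix in
private lemma sum_dotProduct' {ι : Type*} (t : Finset ι) {d : ℕ} (α : Fin d → ℝ)
    (v : ι → Fin d → ℝ) : α ⬝ᵥ (∑ i ∈ t, v i) = ∑ i ∈ t, α ⬝ᵥ v i := by
  simp [dotProduct, Finset.sum_apply, Finset.mul_sum]
  rw [Finset.sum_comm]

open Matrix in
private lemma sum_mulVec' {ι : Type*} (t : Finset ι) {d : ℕ}
    (M : ι → Matrix (Fin d) (Fin d) ℝ) (x : Fin d → ℝ) :
    (∑ i ∈ t, M i) *ᵥ x = ∑ i ∈ t, M i *ᵥ x := by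
  funext j
  simp [Matrix.mulVec, dotProduct, Matrix.sum_apply, Finset.sum_mul]
  rw [Finset.sum_comm]

open Matrix in
private lemma dot_rank1 {d : ℕ} (α u v x : Fin d → ℝ) :
    α ⬝ᵥ (Matrix.vecMulVec u v *ᵥ x) = (∑ j, u j * α j) * (∑ k, v k * x k) := by
  simp only [Matrix.mulVec, dotProduct, Matrix.vecMulVec_apply]
  rw [Finset.sum_mul_sum]
  refine Finset.sum_congr rfl fun j _ => ?_
  rw [Finset.mul_sum]
  refine Finset.sum_congr rfl fun k _ => ?_
  ring

/-- Closed-form solution of the Q-function estimator under linear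
parameterization: with `q = Ψᵀ ζ̂` where `ζ̂ = N⁻¹ c`, the Q-estimation loss
`L_q(w, β̂, q)` vanishes for every linear weight `w = Φᵀ α`. -/
theorem linear_q_closed_form
    {S A : Type*} [Fintype S] [Fintype A] [Nonempty S] [Nonempty A]
    (Pte : S → A → S → ℝ) (π : S → A → ℝ) (γ : ℝ)
    (hPte_nonneg : ∀ s a s', 0 ≤ Pte s a s')
    (hPte_sum : ∀ s a, ∑ s', Pte s a s' = 1)
    (hπ_nonneg : ∀ s a, 0 ≤ π s a) (hπ_sum : ∀ s, ∑ a, π s a = 1)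
    (hγ0 : 0 ≤ γ) (hγ1 : γ < 1)
    (μ βhat dtr r : S → A → ℝ)
    (d : ℕ) (hd : 0 < d)
    (Φ Ψ : S → A → (Fin d → ℝ))
    (N : Matrix (Fin d) (Fin d) ℝ)
    (hN : N = ∑ s, ∑ a, ∑ s', (μ s a * Pte s a s' * βhat s a) •
      Matrix.vecMulVec (Φ s a) (Ψ s a - γ • ∑ a', π s' a' • Ψ s' a'))
    (c : Fin d → ℝ)
    (hc : c = ∑ s, ∑ a, (dtr s a * r s a) • Φ s a)
    (hNunit : IsUnit N)
    (ζhat : Fin d → ℝ) (hζ : ζhat = N⁻¹.mulVec c) :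
    ∀ α : Fin d → ℝ,
      (∑ s, ∑ a, ∑ s', μ s a * Pte s a s' * (∑ j, Φ s a j * α j) * βhat s a *
          ((∑ j, Ψ s a j * ζhat j) - γ * ∑ a', π s' a' * ∑ j, Ψ s' a' j * ζhat j))
        - (∑ s, ∑ a, dtr s a * (∑ j, Φ s a j * α j) * r s a) = 0 := by
  intro α
  have hdet : IsUnit N.det := (Matrix.isUnit_iff_isUnit_det N).mp hNunit
  have key : N.mulVec ζhat = c := by
    rw [hζ, Matrix.mulVec_mulVec, Matrix.mul_nonsing_inv N hdet, Matrix.one_mulVec]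
  have h2 : (∑ s, ∑ a, dtr s a * (∑ j, Φ s a j * α j) * r s a)
      = dotProduct α c := by
    rw [hc, sum_dotProduct']
    refine Finset.sum_congr rfl fun s _ => ?_
    rw [sum_dotProduct']
    refine Finset.sum_congr rfl fun a _ => ?_
    simp only [dotProduct, Pi.smul_apply, smul_eq_mul]
    rw [Finset.mul_sum, Finset.sum_mul]
    exact Finset.sum_congr rfl fun j _ => by ring
  have h1 : (∑ s, ∑ a, ∑ s', μ s a * Pte s a s' * (∑ j, Φ s a j * α j) * βhat s a *
          ((∑ j, Ψ s a j * ζhat j) - γ * ∑ a', π s' a' * ∑ j, Ψ s' a' j * ζhat j))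
      = dotProduct α (N.mulVec ζhat) := by
    rw [hN, sum_mulVec', sum_dotProduct']
    refine Finset.sum_congr rfl fun s _ => ?_
    rw [sum_mulVec', sum_dotProduct']
    refine Finset.sum_congr rfl fun a _ => ?_
    rw [sum_mulVec', sum_dotProduct']
    refine Finset.sum_congr rfl fun s' _ => ?_
    rw [Matrix.smul_mulVec, dotProduct_smul, dot_rank1, smul_eq_mul]
    have hv : (∑ k, (Ψ s a - γ • ∑ a', π s' a' • Ψ s' a') k * ζhat k)
        = (∑ k, Ψ s a k * ζhat k)
          - γ * ∑ a', π s' a' * ∑ k, Ψ s' a' k * ζhat k := by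
      simp only [Pi.sub_apply, Pi.smul_apply, Finset.sum_apply, smul_eq_mul, sub_mul,
        Finset.sum_sub_distrib]
      congr 1
      rw [Finset.mul_sum]
      calc ∑ k, (γ * ∑ a', π s' a' * Ψ s' a' k) * ζhat k
          = ∑ k, ∑ a', γ * (π s' a' * (Ψ s' a' k * ζhat k)) := by
            refine Finset.sum_congr rfl fun k _ => ?_
            rw [Finset.mul_sum, Finset.sum_mul]
            exact Finset.sum_congr rfl fun a' _ => by ring
        _ = ∑ a', ∑ k, γ * (π s' a' * (Ψ s' a' k * ζhat k)) := Finset.sum_comm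
        _ = ∑ a', γ * (π s' a' * ∑ k, Ψ s' a' k * ζhat k) := by
            refine Finset.sum_congr rfl fun a' _ => ?_
            rw [Finset.mul_sum, Finset.mul_sum]
    rw [hv]
    ring
  rw [h1, h2, key, sub_self]
end

section
/- Let S, A be finite nonempty types, P_te a transition kernel, π a policy, d0 an initial distribution, and γ a discount factor with 0 ≤ γ < 1. Let H be a real inner product space and φ : S → A → H a feature map. Let μ, w, β : S → A → ℝ and define q* ∈ H by q* := ∑_{s,a,s'} (μ s a * P_te s a s' * w s a * β s a) • (φ s a − γ • ∑_{a'} π s' a' • φ s' a') − (1 − γ) • ∑_{s} d0 s • ∑_{a} π s a • φ s a. For h ∈ H define q_h : S → A → ℝ by q_h s a := ⟪h, φ s a⟫, and the loss L(h) := ∑_{s,a,s'} μ s a * P_te s a s' * w s a * β s a * (q_h s a − γ * q_h(s', π)) − (1 − γ) * ∑_{s} d0 s * q_h(s, π), where q_h(s', π) := ∑_{a'} π s' a' * q_h s' a'. Then ‖q*‖² is the greatest value of L(h)² over all h ∈ H with ‖h‖ ≤ 1: L(h)² ≤ ‖q*‖² for every such h, and this value is attained. -/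
open scoped RealInnerProductSpace

/-- RKHS closed form for the inner maximization of the MIS loss: over the unit
ball `{q_h : ‖h‖ ≤ 1}` of the RKHS with feature map `φ`, the squared MIS loss
`L_w(w, β, q_h)²` is maximized with maximal value `‖q*‖²`. -/
theorem rkhs_mis_loss_sup
    {S A : Type*} [Fintype S] [Fintype A] [Nonempty S] [Nonempty A]
    (Pte : S → A → S → ℝ) (π : S → A → ℝ) (d0 : S → ℝ) (γ : ℝ)
    (hPte_nonneg : ∀ s a s', 0 ≤ Pte s a s')
    (hPte_sum : ∀ s a, ∑ s', Pte s a s' = 1)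
    (hπ_nonneg : ∀ s a, 0 ≤ π s a) (hπ_sum : ∀ s, ∑ a, π s a = 1)
    (hd0_nonneg : ∀ s, 0 ≤ d0 s) (hd0_sum : ∑ s, d0 s = 1)
    (hγ0 : 0 ≤ γ) (hγ1 : γ < 1)
    {H : Type*} [NormedAddCommGroup H] [InnerProductSpace ℝ H]
    (φ : S → A → H)
    (μ w β : S → A → ℝ)
    (qstar : H)
    (hqstar : qstar =
      (∑ s, ∑ a, ∑ s', (μ s a * Pte s a s' * w s a * β s a) •
        (φ s a - γ • ∑ a', π s' a' • φ s' a'))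
      - (1 - γ) • ∑ s, d0 s • ∑ a, π s a • φ s a)
    (L : H → ℝ)
    (hL : ∀ h : H, L h =
      (∑ s, ∑ a, ∑ s', μ s a * Pte s a s' * w s a * β s a *
        ((⟪h, φ s a⟫ : ℝ) - γ * ∑ a', π s' a' * (⟪h, φ s' a'⟫ : ℝ)))
      - (1 - γ) * ∑ s, d0 s * ∑ a, π s a * (⟪h, φ s a⟫ : ℝ)) :
    (∀ h : H, ‖h‖ ≤ 1 → (L h) ^ 2 ≤ ‖qstar‖ ^ 2) ∧
    (∃ h : H, ‖h‖ ≤ 1 ∧ (L h) ^ 2 = ‖qstar‖ ^ 2) := by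
  have key : ∀ h : H, L h = ⟪h, qstar⟫ := by
    intro h
    rw [hL, hqstar]
    simp only [inner_sub_right, inner_sum, inner_smul_right, real_inner_smul_right,
      mul_sub, Finset.mul_sum]
  constructor
  · intro h hh
    have h1 : |L h| ≤ ‖qstar‖ := by
      rw [key]
      calc |⟪h, qstar⟫| ≤ ‖h‖ * ‖qstar‖ := abs_real_inner_le_norm h qstar
        _ ≤ 1 * ‖qstar‖ := by
            exact mul_le_mul_of_nonneg_right hh (norm_nonneg _)
        _ = ‖qstar‖ := one_mul _
    calc (L h)^2 = |L h|^2 := (sq_abs _).symm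
      _ ≤ ‖qstar‖^2 := by
          exact pow_le_pow_left₀ (abs_nonneg _) h1 2
  · by_cases hq : qstar = 0
    · exact ⟨0, by simp, by simp [key, hq]⟩
    · refine ⟨‖qstar‖⁻¹ • qstar, ?_, ?_⟩
      · rw [norm_smul, norm_inv, norm_norm]
        rw [inv_mul_cancel₀ (norm_ne_zero_iff.2 hq)]
      · rw [key, real_inner_smul_left, real_inner_self_eq_norm_sq]
        field_simp
end

section
/- Let Ω be a finite nonempty type and let p, q : Ω → ℝ satisfy p x > 0 and q x > 0 for all x, ∑_x p x = 1 and ∑_x q x = 1, and suppose K > 0 is a real number with q x ≥ 1/K for all x. Define g x := p x / q x and, for h : Ω → ℝ with h x > 0 for all x, the population loss L(h) := ∑_x q x * h x − ∑_x p x * Real.log (h x). If f : Ω → ℝ satisfies f x > 0 and |f x − g x| ≤ g x for all x, then for every x ∈ Ω: (f x − g x)² ≤ 4 * K * g x * (L(f) − L(g)). -/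
/-- Key analytic inequality: for `0 < t ≤ 2`, `(t-1)² ≤ 4·(t - 1 - log t)`. -/
lemma drpe_key_ineq (t : ℝ) (ht : 0 < t) (ht2 : t ≤ 2) :
    (t - 1) ^ 2 ≤ 4 * (t - 1 - Real.log t) := by
  set φ : ℝ → ℝ := fun s => 4 * (s - 1) - 4 * Real.log s - (s - 1) ^ 2 with hφ
  have hderiv : ∀ s : ℝ, 0 < s → HasDerivAt φ (4 - 4 * (1 / s) - 2 * (s - 1)) s := by
    intro s hs
    have h1 : HasDerivAt (fun s : ℝ => 4 * (s - 1)) (4 * 1) s :=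
      ((hasDerivAt_id s).sub_const 1).const_mul 4
    have h2 : HasDerivAt (fun s : ℝ => 4 * Real.log s) (4 * (1 / s)) s := by
      have := (Real.hasDerivAt_log hs.ne').const_mul (4 : ℝ)
      simpa [one_div] using this
    have h3 : HasDerivAt (fun s : ℝ => (s - 1) ^ 2) (2 * (s - 1)) s := by
      have := ((hasDerivAt_id s).sub_const 1).fun_pow 2
      simpa using this
    have := (h1.sub h2).sub h3
    exact this.congr_deriv (by ring)
  have hφ1 : φ 1 = 0 := by simp [hφ]
  have hmain : 0 ≤ φ t := by
    rcases le_or_gt t 1 with h1 | h1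
    · -- antitone on Ioc 0 1
      have hc : ContinuousOn φ (Set.Ioc (0 : ℝ) 1) := fun s hs =>
        ((hderiv s hs.1).continuousAt).continuousWithinAt
      have hint : interior (Set.Ioc (0 : ℝ) 1) = Set.Ioo 0 1 := interior_Ioc
      have hdiff : DifferentiableOn ℝ φ (interior (Set.Ioc (0 : ℝ) 1)) := by
        rw [hint]
        exact fun s hs => ((hderiv s hs.1).differentiableAt).differentiableWithinAt
      have hd0 : ∀ s ∈ interior (Set.Ioc (0 : ℝ) 1), deriv φ s ≤ 0 := by
        rw [hint]
        intro s hs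
        rw [(hderiv s hs.1).deriv]
        have hs0 : 0 < s := hs.1
        have hs1 : s < 1 := hs.2
        have h5 : 6 - 2 * s ≤ 4 / s := by
          rw [le_div_iff₀ hs0]; nlinarith
        have h6 : 4 - 4 * (1 / s) - 2 * (s - 1) = (6 - 2 * s) - 4 / s := by ring
        linarith [h6.le, h6.ge]
      have hanti : AntitoneOn φ (Set.Ioc (0 : ℝ) 1) :=
        antitoneOn_of_deriv_nonpos (convex_Ioc 0 1) hc hdiff hd0
      have := hanti (Set.mem_Ioc.2 ⟨ht, h1⟩) (Set.mem_Ioc.2 ⟨one_pos, le_rfl⟩) h1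
      linarith [this, hφ1.ge]
    · -- monotone on Icc 1 2
      have hc : ContinuousOn φ (Set.Icc (1 : ℝ) 2) := fun s hs =>
        ((hderiv s (lt_of_lt_of_le one_pos hs.1)).continuousAt).continuousWithinAt
      have hint : interior (Set.Icc (1 : ℝ) 2) = Set.Ioo 1 2 := interior_Icc
      have hdiff : DifferentiableOn ℝ φ (interior (Set.Icc (1 : ℝ) 2)) := by
        rw [hint]
        exact fun s hs =>
          ((hderiv s (lt_trans one_pos hs.1)).differentiableAt).differentiableWithinAt
      have hd0 : ∀ s ∈ interior (Set.Icc (1 : ℝ) 2), 0 ≤ deriv φ s := by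
        rw [hint]
        intro s hs
        rw [(hderiv s (lt_trans one_pos hs.1)).deriv]
        have hs0 : (0 : ℝ) < s := lt_trans one_pos hs.1
        have h4 : 4 * (1 / s) ≤ 4 * (1 / s) := le_rfl
        have : 4 * (1 / s) ≤ 6 - 2 * s := by
          rw [mul_one_div, div_le_iff₀ hs0]
          nlinarith [hs.1.le, hs.2.le]
        linarith
      have hmono : MonotoneOn φ (Set.Icc (1 : ℝ) 2) :=
        monotoneOn_of_deriv_nonneg (convex_Icc 1 2) hc hdiff hd0
      have := hmono (Set.mem_Icc.2 ⟨le_rfl, one_le_two⟩) (Set.mem_Icc.2 ⟨h1.le, ht2⟩) h1.le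
      linarith [this, hφ1.ge]
  simp only [hφ] at hmain
  linarith

/-- Pointwise estimation-error bound for direct density-ratio estimation: the
squared pointwise error of an estimate `f` of the ratio `g = p/q` is controlled
by its excess population loss `L(f) − L(g)`. -/
theorem density_ratio_pointwise_error_bound
    {Ω : Type*} [Fintype Ω] [Nonempty Ω]
    (p q : Ω → ℝ)
    (hp : ∀ x, 0 < p x) (hq : ∀ x, 0 < q x)
    (hps : ∑ x, p x = 1) (hqs : ∑ x, q x = 1)
    (K : ℝ) (hK : 0 < K) (hqK : ∀ x, 1 / K ≤ q x)
    (g : Ω → ℝ) (hg : ∀ x, g x = p x / q x)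
    (L : (Ω → ℝ) → ℝ)
    (hL : ∀ h : Ω → ℝ, L h = (∑ x, q x * h x) - ∑ x, p x * Real.log (h x))
    (f : Ω → ℝ) (hf_pos : ∀ x, 0 < f x)
    (hf_close : ∀ x, |f x - g x| ≤ g x) :
    ∀ x, (f x - g x) ^ 2 ≤ 4 * K * g x * (L f - L g) := by
  have hg_pos : ∀ x, 0 < g x := fun x => by
    rw [hg x]; exact div_pos (hp x) (hq x)
  have hpq : ∀ x, q x * g x = p x := fun x => by
    rw [hg x, mul_comm]; exact div_mul_cancel₀ _ (hq x).ne'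
  set T : Ω → ℝ := fun y => q y * g y * (f y / g y - 1 - Real.log (f y / g y)) with hT
  have ht_pos : ∀ y, 0 < f y / g y := fun y => div_pos (hf_pos y) (hg_pos y)
  have ht2 : ∀ y, f y / g y ≤ 2 := by
    intro y
    rw [div_le_iff₀ (hg_pos y)]
    have := abs_le.1 (hf_close y)
    linarith [this.2]
  have hLdiff : L f - L g = ∑ y, T y := by
    rw [hL f, hL g]
    rw [show (∑ x, q x * f x) - (∑ x, p x * Real.log (f x)) -
        ((∑ x, q x * g x) - ∑ x, p x * Real.log (g x)) =
        ∑ x, (q x * f x - p x * Real.log (f x) - (q x * g x - p x * Real.log (g x))) by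
      rw [Finset.sum_sub_distrib, Finset.sum_sub_distrib, Finset.sum_sub_distrib]]
    refine Finset.sum_congr rfl fun y _ => ?_
    have hlog : Real.log (f y / g y) = Real.log (f y) - Real.log (g y) :=
      Real.log_div (hf_pos y).ne' (hg_pos y).ne'
    simp only [hT]
    rw [hlog, ← hpq y]
    field_simp [(hg_pos y).ne']
    ring
  have hT_nonneg : ∀ y, 0 ≤ T y := by
    intro y
    have hlog := Real.log_le_sub_one_of_pos (ht_pos y)
    have := mul_pos (hq y) (hg_pos y)
    simp only [hT]
    nlinarith
  have hsum_ge : ∀ x, T x ≤ L f - L g := by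
    intro x
    rw [hLdiff]
    exact Finset.single_le_sum (fun y _ => hT_nonneg y) (Finset.mem_univ x)
  intro x
  have hkey := drpe_key_ineq (f x / g x) (ht_pos x) (ht2 x)
  have hTx : q x * g x * ((f x / g x - 1) ^ 2) / 4 ≤ T x := by
    simp only [hT]
    have := mul_pos (hq x) (hg_pos x)
    nlinarith
  have hgx := hg_pos x
  have hfrac : (f x / g x - 1) ^ 2 = (f x - g x) ^ 2 / (g x) ^ 2 := by
    field_simp <;> ring
  have hqK' : 1 ≤ K * q x := by
    have := hqK x
    rw [div_le_iff₀ hK] at this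
    linarith [mul_comm (q x) K ▸ this]
  have h1 : q x * (f x - g x) ^ 2 / (4 * g x) ≤ T x := by
    rw [hfrac] at hTx
    have hgx2 : (0 : ℝ) < (g x) ^ 2 := by positivity
    calc q x * (f x - g x) ^ 2 / (4 * g x)
        = q x * g x * ((f x - g x) ^ 2 / (g x) ^ 2) / 4 := by
          field_simp
      _ ≤ T x := hTx
  have h2 : q x * (f x - g x) ^ 2 / (4 * g x) ≤ L f - L g := le_trans h1 (hsum_ge x)
  have h3 : q x * (f x - g x) ^ 2 ≤ 4 * g x * (L f - L g) := by
    rw [div_le_iff₀ (by positivity)] at h2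
    linarith [h2]
  calc (f x - g x) ^ 2 = 1 * (f x - g x) ^ 2 := by ring
    _ ≤ (K * q x) * (f x - g x) ^ 2 := by
        apply mul_le_mul_of_nonneg_right hqK' (by positivity)
    _ = K * (q x * (f x - g x) ^ 2) := by ring
    _ ≤ K * (4 * g x * (L f - L g)) := by
        apply mul_le_mul_of_nonneg_left h3 hK.le
    _ = 4 * K * g x * (L f - L g) := by ring
end

section
/- Let S, A be finite nonempty types, P a transition kernel, π a policy, d0 an initial distribution, γ a discount factor with 0 ≤ γ < 1, and r : S → A → ℝ a reward. Suppose d : S → A → ℝ satisfies the Bellman flow equation for (P, π, d0, γ) and Q : S → A → ℝ satisfies the Bellman equation for (P, π, r, γ). Then (1 − γ) * ∑_{s} d0 s * Q(s, π) = ∑_{s,a} d s a * r s a. -/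
/-- The two expressions for the discounted return coincide: the initial-state
value form `(1 − γ) E_{d0}[V^π]` equals the occupancy form `E_{d^π}[r]`, where
`d` solves the Bellman flow equation and `Q` solves the Bellman equation. -/
theorem discounted_return_eq_occupancy_form
    {S A : Type*} [Fintype S] [Fintype A] [Nonempty S] [Nonempty A]
    (P : S → A → S → ℝ) (π : S → A → ℝ) (d0 : S → ℝ) (γ : ℝ) (r : S → A → ℝ)
    (hP_nonneg : ∀ s a s', 0 ≤ P s a s')
    (hP_sum : ∀ s a, ∑ s', P s a s' = 1)
    (hπ_nonneg : ∀ s a, 0 ≤ π s a) (hπ_sum : ∀ s, ∑ a, π s a = 1)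
    (hd0_nonneg : ∀ s, 0 ≤ d0 s) (hd0_sum : ∑ s, d0 s = 1)
    (hγ0 : 0 ≤ γ) (hγ1 : γ < 1)
    (d : S → A → ℝ)
    (hd : ∀ s a, d s a
      = (1 - γ) * d0 s * π s a + γ * π s a * ∑ sb, ∑ ab, P sb ab s * d sb ab)
    (Q : S → A → ℝ)
    (hQ : ∀ s a, Q s a = r s a + γ * ∑ s', P s a s' * ∑ a', π s' a' * Q s' a') :
    (1 - γ) * (∑ s, d0 s * ∑ a, π s a * Q s a) = ∑ s, ∑ a, d s a * r s a := by
  set V : S → ℝ := fun s => ∑ a, π s a * Q s a with hV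
  set X : ℝ := ∑ s, ∑ a, d s a * ∑ s', P s a s' * V s' with hX
  have h2 : ∑ s, ∑ a, d s a * r s a = (∑ s, ∑ a, d s a * Q s a) - γ * X := by
    rw [hX, Finset.mul_sum, ← Finset.sum_sub_distrib]
    refine Finset.sum_congr rfl fun s _ => ?_
    rw [Finset.mul_sum, ← Finset.sum_sub_distrib]
    refine Finset.sum_congr rfl fun a _ => ?_
    simp only [hV]
    rw [hQ s a]
    ring
  have h1 : ∑ s, ∑ a, d s a * Q s a
      = (1 - γ) * (∑ s, d0 s * V s) + γ * X := by
    have hrw : ∀ s, ∑ a, d s a * Q s a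
        = (1 - γ) * (d0 s * V s)
          + γ * ∑ sb, ∑ ab, (P sb ab s * d sb ab) * V s := by
      intro s
      have key : ∀ a, d s a * Q s a
          = (1 - γ) * (d0 s * (π s a * Q s a))
            + γ * ∑ sb, ∑ ab, (P sb ab s * d sb ab) * (π s a * Q s a) := by
        intro a
        rw [hd s a, add_mul]
        congr 1
        · ring
        · simp only [Finset.mul_sum, Finset.sum_mul]
          exact Finset.sum_congr rfl fun sb _ =>
            Finset.sum_congr rfl fun ab _ => by ring
      rw [Finset.sum_congr rfl fun a _ => key a, Finset.sum_add_distrib]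
      congr 1
      · rw [← Finset.mul_sum, ← Finset.mul_sum]
      · rw [← Finset.mul_sum]
        congr 1
        rw [Finset.sum_comm]
        refine Finset.sum_congr rfl fun sb _ => ?_
        rw [Finset.sum_comm]
        refine Finset.sum_congr rfl fun ab _ => ?_
        rw [← Finset.mul_sum]
    rw [Finset.sum_congr rfl fun s _ => hrw s, Finset.sum_add_distrib,
      ← Finset.mul_sum, ← Finset.mul_sum]
    congr 1
    congr 1
    rw [hX, Finset.sum_comm]
    refine Finset.sum_congr rfl fun sb _ => ?_
    rw [Finset.sum_comm]
    refine Finset.sum_congr rfl fun ab _ => ?_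
    rw [Finset.mul_sum]
    refine Finset.sum_congr rfl fun s _ => ?_
    ring
  rw [h2, h1]
  ring
end
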